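/- Let X be a special abstract rank one group with abelian unipotent subgroups A and B, and H = N_X(A) ∩ N_X(B). If [A,H] = 1, then |A| ≤ 3. -/

import Mathlib

/-- Conjugate `S ^ g = g⁻¹ S g` of a subgroup. -/
def conjSub {X : Type*} [Group X] (S : Subgroup X) (g : X) : Subgroup X :=
  S.map ((MulAut.conj g⁻¹).toMonoidHom)

section ConjSubAPI

variable {X : Type*} [Group X]

lemma mem_conjSub {S : Subgroup X} {g y : X} : y ∈ conjSub S g ↔ g * y * g⁻¹ ∈ S := by
  unfold conjSub
  rw [Subgroup.mem_map]
  constructor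
  · rintro ⟨x, hx, rfl⟩
    simpa [MulAut.conj_apply, mul_assoc] using hx
  · intro h
    refine ⟨g * y * g⁻¹, h, ?_⟩
    simp [MulAut.conj_apply, mul_assoc]

lemma conjSub_mul (S : Subgroup X) (g h : X) :
    conjSub S (g * h) = conjSub (conjSub S g) h := by
  ext y
  simp only [mem_conjSub]
  have e : g * (h * y * h⁻¹) * g⁻¹ = g * h * y * (g * h)⁻¹ := by group
  rw [e]

lemma conjSub_eq_of_mem_normalizer {S : Subgroup X} {g : X} (hg : g ∈ Subgroup.normalizer (S : Set X)) :
    conjSub S g = S := by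
  ext y
  rw [mem_conjSub]
  exact (Subgroup.mem_normalizer_iff.mp hg y).symm

lemma mem_normalizer_of_conjSub_eq {S : Subgroup X} {g : X} (h : conjSub S g = S) :
    g ∈ Subgroup.normalizer (S : Set X) := by
  rw [Subgroup.mem_normalizer_iff]
  exact fun y => ((show y ∈ conjSub S g ↔ y ∈ S by rw [h]).symm).trans mem_conjSub

lemma conjSub_one (S : Subgroup X) : conjSub S 1 = S :=
  conjSub_eq_of_mem_normalizer (one_mem _)

lemma conjSub_inv_eq {S T : Subgroup X} {g : X} (h : conjSub S g = T) :
    conjSub T g⁻¹ = S := by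
  rw [← h, ← conjSub_mul, mul_inv_cancel, conjSub_one]

end ConjSubAPI

/-- The key group-theoretic computation in the quotient by the center. -/
lemma endgame_calc {Q : Type*} [Group Q] (s x y : Q)
    (hs : s * s = 1)
    (hx3 : (s * x) * (s * x) * (s * x) = 1)
    (hy3 : (s * y) * (s * y) * (s * y) = 1)
    (hxy3 : (s * (x * y)) * (s * (x * y)) * (s * (x * y)) = 1)
    (hm3 : (s * (x⁻¹ * y)) * (s * (x⁻¹ * y)) * (s * (x⁻¹ * y)) = 1)
    (hc : x * y = y * x) :
    s = x⁻¹ * x⁻¹ * x⁻¹ := by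
  have hsinv : s⁻¹ = s := inv_eq_of_mul_eq_one_right hs
  have eform : ∀ u : Q, (s * u) * (s * u) * (s * u) = 1 → s * u * s = u⁻¹ * s * u⁻¹ := by
    intro u h
    have h1 : (s * u * s) * (u * s * u) = 1 := by
      calc (s * u * s) * (u * s * u) = (s * u) * (s * u) * (s * u) := by group
      _ = 1 := h
    rw [eq_inv_of_mul_eq_one_left h1]
    have h2 : (u * s * u)⁻¹ = u⁻¹ * s⁻¹ * u⁻¹ := by group
    rw [h2, hsinv]
  have ex := eform x hx3
  have ey := eform y hy3
  have exy := eform (x * y) hxy3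
  have em := eform (x⁻¹ * y) hm3
  have ci : y⁻¹ * x⁻¹ = x⁻¹ * y⁻¹ := by
    have h := congrArg (·⁻¹) hc
    simpa [mul_inv_rev] using h
  have e1 : x⁻¹ * s * x⁻¹ * (y⁻¹ * s * y⁻¹) = (x * y)⁻¹ * s * (x * y)⁻¹ := by
    rw [← ex, ← ey, ← exy]
    calc s * x * s * (s * y * s) = s * x * (s * s) * (y * s) := by group
    _ = s * (x * y) * s := by rw [hs]; group
  have e2 : x⁻¹ * (y⁻¹ * s * (y⁻¹ * x⁻¹)) = x⁻¹ * (s * x⁻¹ * (y⁻¹ * s * y⁻¹)) := by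
    calc x⁻¹ * (y⁻¹ * s * (y⁻¹ * x⁻¹)) = (x⁻¹ * y⁻¹) * s * (y⁻¹ * x⁻¹) := by group
    _ = (y⁻¹ * x⁻¹) * s * (y⁻¹ * x⁻¹) := by rw [← ci]
    _ = (x * y)⁻¹ * s * (x * y)⁻¹ := by rw [mul_inv_rev]
    _ = x⁻¹ * s * x⁻¹ * (y⁻¹ * s * y⁻¹) := e1.symm
    _ = x⁻¹ * (s * x⁻¹ * (y⁻¹ * s * y⁻¹)) := by group
  have e3 := mul_left_cancel e2
  have hy' : s * y⁻¹ * s = y * s * y := by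
    calc s * y⁻¹ * s = (s⁻¹ * y * s⁻¹)⁻¹ := by group
    _ = (s * y * s)⁻¹ := by rw [hsinv]
    _ = (y⁻¹ * s * y⁻¹)⁻¹ := by rw [ey]
    _ = y * s⁻¹ * y := by group
    _ = y * s * y := by rw [hsinv]
  have e5 : y * (s * x⁻¹) = x⁻¹ * (y⁻¹ * s * y⁻¹) := by
    calc y * (s * x⁻¹) = (y * s * y) * (y⁻¹ * x⁻¹) := by group
    _ = (s * y⁻¹ * s) * (y⁻¹ * x⁻¹) := by rw [hy']
    _ = s * (y⁻¹ * s * (y⁻¹ * x⁻¹)) := by group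
    _ = s * (s * x⁻¹ * (y⁻¹ * s * y⁻¹)) := by rw [e3]
    _ = (s * s) * (x⁻¹ * (y⁻¹ * s * y⁻¹)) := by group
    _ = x⁻¹ * (y⁻¹ * s * y⁻¹) := by rw [hs, one_mul]
  have e6 : s * x⁻¹ = y⁻¹ * (x⁻¹ * (y⁻¹ * s * y⁻¹)) := by
    rw [← e5]; group
  have G : s * (x⁻¹ * y) * s = y⁻¹ * (x⁻¹ * y⁻¹) := by
    calc s * (x⁻¹ * y) * s = (s * x⁻¹) * (y * s) := by group
    _ = (y⁻¹ * (x⁻¹ * (y⁻¹ * s * y⁻¹))) * (y * s) := by rw [e6]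
    _ = y⁻¹ * (x⁻¹ * y⁻¹) * (s * (y⁻¹ * y) * s) := by group
    _ = y⁻¹ * (x⁻¹ * y⁻¹) * (s * s) := by rw [inv_mul_cancel]; group
    _ = y⁻¹ * (x⁻¹ * y⁻¹) := by rw [hs, mul_one]
  have h1 : (x⁻¹ * y)⁻¹ * s * (x⁻¹ * y)⁻¹ = y⁻¹ * (x⁻¹ * y⁻¹) := by rw [← em, G]
  calc s = (x⁻¹ * y) * ((x⁻¹ * y)⁻¹ * s * (x⁻¹ * y)⁻¹) * (x⁻¹ * y) := by group
  _ = (x⁻¹ * y) * (y⁻¹ * (x⁻¹ * y⁻¹)) * (x⁻¹ * y) := by rw [h1]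
  _ = x⁻¹ * x⁻¹ * ((y⁻¹ * x⁻¹) * y) := by group
  _ = x⁻¹ * x⁻¹ * ((x⁻¹ * y⁻¹) * y) := by rw [ci]
  _ = x⁻¹ * x⁻¹ * x⁻¹ := by group

theorem stmt7
    {X : Type*} [Group X] (A B : Subgroup X) (hAB : A ≠ B)
    (hAcomm : IsMulCommutative A) (hBcomm : IsMulCommutative B)
    (hgen : A ⊔ B = ⊤)
    (hab : ∀ a ∈ A, a ≠ 1 → ∃ b ∈ B, b ≠ 1 ∧ conjSub A b = conjSub B a)
    (hba : ∀ b ∈ B, b ≠ 1 → ∃ a ∈ A, a ≠ 1 ∧ conjSub B a = conjSub A b)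
    (bf : X → X)
    (hbf : ∀ a ∈ A, a ≠ 1 → bf a ∈ B ∧ bf a ≠ 1 ∧ conjSub A (bf a) = conjSub B a)
    (hbfu : ∀ a ∈ A, a ≠ 1 → ∀ b ∈ B, b ≠ 1 → conjSub A b = conjSub B a → b = bf a)
    (hspecial : ∀ a ∈ A, a ≠ 1 → bf a⁻¹ = (bf a)⁻¹)
    (hcomm : ⁅A, Subgroup.normalizer (A : Set X) ⊓ Subgroup.normalizer (B : Set X)⁆ = ⊥) :
    Cardinal.mk A ≤ 3 := by
  classical
  haveI := hAcomm
  by_cases hA0 : ∀ a ∈ A, a = (1 : X)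
  · -- trivial case
    have hcard1 : Cardinal.mk A ≤ Cardinal.mk ({(1 : X)} : Set X) := by
      apply Cardinal.mk_le_of_injective
        (f := fun x : A => (⟨x.1, by simp [hA0 x.1 x.2]⟩ : ({(1 : X)} : Set X)))
      intro u v huv
      simp only [Subtype.mk.injEq] at huv
      exact Subtype.ext huv
    refine hcard1.trans ?_
    rw [Cardinal.mk_singleton]
    norm_num
  push_neg at hA0
  obtain ⟨a₀, ha₀A, ha₀1⟩ := hA0
  -- commutation of A with H
  have hAH : ∀ a ∈ A, ∀ h : X, h ∈ Subgroup.normalizer (A : Set X) → h ∈ Subgroup.normalizer (B : Set X) → a * h = h * a := by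
    intro a ha h hh1 hh2
    open commutatorElement in
    have hmem : ⁅a, h⁆ ∈ (⊥ : Subgroup X) :=
      (Subgroup.commutator_le).mp hcomm.le a ha h (Subgroup.mem_inf.mpr ⟨hh1, hh2⟩)
    rw [Subgroup.mem_bot] at hmem
    exact commutatorElement_eq_one_iff_mul_comm.mp hmem
  -- A ∩ N(B) = 1
  have hAnB : ∀ a ∈ A, a ∈ Subgroup.normalizer (B : Set X) → a = 1 := by
    intro a ha hnb
    by_contra h1
    obtain ⟨hbB, hb1, hbc⟩ := hbf a ha h1
    have hBa : conjSub A (bf a) = B := by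
      rw [hbc, conjSub_eq_of_mem_normalizer hnb]
    have hinv : conjSub B (bf a)⁻¹ = A := conjSub_inv_eq hBa
    have hself : conjSub B (bf a)⁻¹ = B :=
      conjSub_eq_of_mem_normalizer (inv_mem (Subgroup.le_normalizer hbB))
    exact hAB (by rw [← hinv, hself])
  -- B ∩ N(A) = 1  (not needed below, but kept for symmetry of the argument)
  -- special conjugation fact
  have hbc' : ∀ a ∈ A, a ≠ 1 → conjSub A (bf a)⁻¹ = conjSub B a⁻¹ := by
    intro a ha h1
    have h2 := (hbf a⁻¹ (inv_mem ha) (inv_ne_one.mpr h1)).2.2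
    rwa [hspecial a ha h1] at h2
  -- the swapping element v a = a⁻¹ * bf a * a⁻¹
  have hv : ∀ a ∈ A, a ≠ 1 →
      conjSub A (a⁻¹ * bf a * a⁻¹) = B ∧ conjSub B (a⁻¹ * bf a * a⁻¹) = A := by
    intro a ha h1
    obtain ⟨hbB, hb1, hbc⟩ := hbf a ha h1
    have hnaA : a⁻¹ ∈ Subgroup.normalizer (A : Set X) := Subgroup.le_normalizer (inv_mem ha)
    constructor
    · calc conjSub A (a⁻¹ * bf a * a⁻¹)
          = conjSub (conjSub (conjSub A a⁻¹) (bf a)) a⁻¹ := by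
            rw [← conjSub_mul, ← conjSub_mul, mul_assoc]
      _ = conjSub (conjSub A (bf a)) a⁻¹ := by rw [conjSub_eq_of_mem_normalizer hnaA]
      _ = conjSub (conjSub B a) a⁻¹ := by rw [hbc]
      _ = conjSub B (a * a⁻¹) := by rw [conjSub_mul]
      _ = B := by rw [mul_inv_cancel, conjSub_one]
    · calc conjSub B (a⁻¹ * bf a * a⁻¹)
          = conjSub (conjSub (conjSub B a⁻¹) (bf a)) a⁻¹ := by
            rw [← conjSub_mul, ← conjSub_mul, mul_assoc]
      _ = conjSub (conjSub (conjSub A (bf a)⁻¹) (bf a)) a⁻¹ := by rw [hbc' a ha h1]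
      _ = conjSub (conjSub A ((bf a)⁻¹ * bf a)) a⁻¹ := by rw [conjSub_mul]
      _ = conjSub A a⁻¹ := by rw [inv_mul_cancel, conjSub_one]
      _ = A := conjSub_eq_of_mem_normalizer hnaA
  -- the swapping element w a = (bf a)⁻¹ * a * (bf a)⁻¹
  have hw : ∀ a ∈ A, a ≠ 1 →
      conjSub A ((bf a)⁻¹ * a * (bf a)⁻¹) = B ∧ conjSub B ((bf a)⁻¹ * a * (bf a)⁻¹) = A := by
    intro a ha h1
    obtain ⟨hbB, hb1, hbc⟩ := hbf a ha h1
    have hnbB : (bf a)⁻¹ ∈ Subgroup.normalizer (B : Set X) := Subgroup.le_normalizer (inv_mem hbB)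
    constructor
    · calc conjSub A ((bf a)⁻¹ * a * (bf a)⁻¹)
          = conjSub (conjSub (conjSub A (bf a)⁻¹) a) (bf a)⁻¹ := by
            rw [← conjSub_mul, ← conjSub_mul, mul_assoc]
      _ = conjSub (conjSub (conjSub B a⁻¹) a) (bf a)⁻¹ := by rw [hbc' a ha h1]
      _ = conjSub (conjSub B (a⁻¹ * a)) (bf a)⁻¹ := by rw [conjSub_mul]
      _ = conjSub B (bf a)⁻¹ := by rw [inv_mul_cancel, conjSub_one]
      _ = B := conjSub_eq_of_mem_normalizer hnbB
    · calc conjSub B ((bf a)⁻¹ * a * (bf a)⁻¹)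
          = conjSub (conjSub (conjSub B (bf a)⁻¹) a) (bf a)⁻¹ := by
            rw [← conjSub_mul, ← conjSub_mul, mul_assoc]
      _ = conjSub (conjSub B a) (bf a)⁻¹ := by rw [conjSub_eq_of_mem_normalizer hnbB]
      _ = conjSub (conjSub A (bf a)) (bf a)⁻¹ := by rw [hbc]
      _ = conjSub A (bf a * (bf a)⁻¹) := by rw [conjSub_mul]
      _ = A := by rw [mul_inv_cancel, conjSub_one]
  -- product of two swapping elements lies in H
  have hswap : ∀ n₁ n₂ : X, conjSub A n₁ = B → conjSub B n₁ = A →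
      conjSub A n₂ = B → conjSub B n₂ = A →
      n₁ * n₂⁻¹ ∈ Subgroup.normalizer (A : Set X) ⊓ Subgroup.normalizer (B : Set X) := by
    intro n₁ n₂ h1 h2 h3 h4
    refine Subgroup.mem_inf.mpr ⟨mem_normalizer_of_conjSub_eq ?_, mem_normalizer_of_conjSub_eq ?_⟩
    · rw [conjSub_mul, h1]; exact conjSub_inv_eq h3
    · rw [conjSub_mul, h2]; exact conjSub_inv_eq h4
  -- H is central
  have hHZ : ∀ h : X, h ∈ Subgroup.normalizer (A : Set X) → h ∈ Subgroup.normalizer (B : Set X) → h ∈ Subgroup.center X := by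
    intro h hh1 hh2
    have hcA : ∀ a ∈ A, h * a = a * h := fun a ha => (hAH a ha h hh1 hh2).symm
    have hcB : ∀ b ∈ B, h * b = b * h := by
      intro b hbB
      by_cases hb1 : b = 1
      · subst hb1; simp
      obtain ⟨a', ha'A, ha'1, hstar⟩ := hba b hbB hb1
      have hba' : b = bf a' := hbfu a' ha'A ha'1 b hbB hb1 hstar.symm
      have hcomm_a : h⁻¹ * a' * h = a' := by
        have hca := hAH a' ha'A h hh1 hh2
        calc h⁻¹ * a' * h = h⁻¹ * (a' * h) := by group
        _ = h⁻¹ * (h * a') := by rw [hca]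
        _ = a' := by group
      have hbmem : h⁻¹ * b * h ∈ B := by
        have hmn := Subgroup.mem_normalizer_iff.mp (inv_mem hh2) b
        simpa using hmn.mp hbB
      have hbne : h⁻¹ * b * h ≠ 1 := by
        intro hcon
        apply hb1
        have : b = h * (h⁻¹ * b * h) * h⁻¹ := by group
        rw [hcon] at this
        simpa using this
      have hconj : conjSub A (h⁻¹ * b * h) = conjSub B a' := by
        calc conjSub A (h⁻¹ * b * h)
            = conjSub (conjSub (conjSub A h⁻¹) b) h := by
              rw [← conjSub_mul, ← conjSub_mul, mul_assoc]
        _ = conjSub (conjSub A b) h := by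
              rw [conjSub_eq_of_mem_normalizer (inv_mem hh1)]
        _ = conjSub (conjSub B a') h := by rw [← hstar]
        _ = conjSub (conjSub (conjSub B h⁻¹) a') h := by
              rw [conjSub_eq_of_mem_normalizer (inv_mem hh2)]
        _ = conjSub B (h⁻¹ * a' * h) := by rw [← conjSub_mul, ← conjSub_mul, mul_assoc]
        _ = conjSub B a' := by rw [hcomm_a]
      have hfix := hbfu a' ha'A ha'1 (h⁻¹ * b * h) hbmem hbne hconj
      rw [← hba'] at hfix
      have hmove : h * (h⁻¹ * b * h) = b * h := by group
      rw [hfix] at hmove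
      exact hmove
    rw [Subgroup.mem_center_iff]
    intro g
    have hA_le : A ≤ Subgroup.centralizer {h} := by
      intro a ha
      rw [Subgroup.mem_centralizer_iff]
      intro s hs
      rw [Set.mem_singleton_iff] at hs
      subst hs
      exact hcA a ha
    have hB_le : B ≤ Subgroup.centralizer {h} := by
      intro b hb
      rw [Subgroup.mem_centralizer_iff]
      intro s hs
      rw [Set.mem_singleton_iff] at hs
      subst hs
      exact hcB b hb
    have htop : (⊤ : Subgroup X) ≤ Subgroup.centralizer {h} := by
      rw [← hgen]; exact sup_le hA_le hB_le
    exact (Subgroup.mem_centralizer_iff.mp (htop (Subgroup.mem_top g)) h rfl).symm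
  -- fix the swapping element n
  obtain ⟨hv₀A, hv₀B⟩ := hv a₀ ha₀A ha₀1
  set n := a₀⁻¹ * bf a₀ * a₀⁻¹ with hn_def
  -- central elements
  have hZmem : ∀ a ∈ A, a ≠ 1 → (a⁻¹ * bf a * a⁻¹) * n⁻¹ ∈ Subgroup.center X := by
    intro a ha h1
    obtain ⟨h1', h2'⟩ := hv a ha h1
    have hmem := hswap _ _ h1' h2' hv₀A hv₀B
    exact hHZ _ (Subgroup.mem_inf.mp hmem).1 (Subgroup.mem_inf.mp hmem).2
  have hZsq : n * n ∈ Subgroup.center X := by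
    apply hHZ
    · apply mem_normalizer_of_conjSub_eq; rw [conjSub_mul, hv₀A, hv₀B]
    · apply mem_normalizer_of_conjSub_eq; rw [conjSub_mul, hv₀B, hv₀A]
  have hZcube : ∀ a ∈ A, a ≠ 1 →
      (a⁻¹ * bf a) * (a⁻¹ * bf a) * (a⁻¹ * bf a) ∈ Subgroup.center X := by
    intro a ha h1
    obtain ⟨hv1, hv2⟩ := hv a ha h1
    obtain ⟨hw1, hw2⟩ := hw a ha h1
    have hmem := hswap _ _ hv1 hv2 hw1 hw2
    have heq : (a⁻¹ * bf a * a⁻¹) * ((bf a)⁻¹ * a * (bf a)⁻¹)⁻¹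
        = (a⁻¹ * bf a) * (a⁻¹ * bf a) * (a⁻¹ * bf a) := by group
    rw [heq] at hmem
    exact hHZ _ (Subgroup.mem_inf.mp hmem).1 (Subgroup.mem_inf.mp hmem).2
  -- pass to the quotient by the center
  set π : X →* X ⧸ Subgroup.center X := QuotientGroup.mk' (Subgroup.center X) with hπ_def
  have hπ0 : ∀ x : X, x ∈ Subgroup.center X → π x = 1 := fun x hx =>
    (QuotientGroup.eq_one_iff x).mpr hx
  have hπ0' : ∀ x : X, π x = 1 → x ∈ Subgroup.center X := fun x hx =>
    (QuotientGroup.eq_one_iff x).mp hx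
  -- injectivity on A
  have hinj : ∀ a ∈ A, π a = 1 → a = 1 := by
    intro a ha h1
    exact hAnB a ha (Subgroup.center_le_normalizer _ (hπ0' a h1))
  -- π n ∉ π A
  have hsne : ∀ x ∈ A, π n ≠ π x := by
    intro x hx hcon
    have h1 : π (x⁻¹ * n) = 1 := by
      rw [map_mul, map_inv, ← hcon]; group
    have hnormal : x⁻¹ * n ∈ Subgroup.normalizer (A : Set X) :=
      Subgroup.center_le_normalizer _ (hπ0' _ h1)
    have hAA : conjSub A n = A := by
      have h2 : conjSub A (x * (x⁻¹ * n)) = A := by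
        rw [conjSub_mul, conjSub_eq_of_mem_normalizer (Subgroup.le_normalizer hx),
          conjSub_eq_of_mem_normalizer hnormal]
      rw [mul_inv_cancel_left] at h2
      exact h2
    rw [hv₀A] at hAA
    exact hAB hAA.symm
  -- the image of bf a
  have hπv : ∀ a ∈ A, a ≠ 1 → π (bf a) = π a * π n * π a := by
    intro a ha h1
    have hz := hZmem a ha h1
    have hmk : π (a⁻¹ * bf a * a⁻¹) = π n := by
      have h0 : π ((a⁻¹ * bf a * a⁻¹) * n⁻¹) = 1 := hπ0 _ hz
      rw [map_mul, map_inv] at h0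
      exact mul_inv_eq_one.mp h0
    have h3 : (π a)⁻¹ * π (bf a) * (π a)⁻¹ = π n := by
      rw [← hmk, map_mul, map_mul, map_inv]
    calc π (bf a) = π a * ((π a)⁻¹ * π (bf a) * (π a)⁻¹) * π a := by group
    _ = π a * π n * π a := by rw [h3]
  -- the cube relation
  have hπcube : ∀ a ∈ A, a ≠ 1 → (π n * π a) * (π n * π a) * (π n * π a) = 1 := by
    intro a ha h1
    have hz := hZcube a ha h1
    have h0 : π ((a⁻¹ * bf a) * (a⁻¹ * bf a) * (a⁻¹ * bf a)) = 1 := hπ0 _ hz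
    rw [map_mul, map_mul, map_mul, map_inv] at h0
    rw [hπv a ha h1] at h0
    have he : (π a)⁻¹ * (π a * π n * π a) = π n * π a := by group
    rw [he] at h0
    exact h0
  have hπs : π n * π n = 1 := by
    rw [← map_mul]; exact hπ0 _ hZsq
  have hπcomm : ∀ a ∈ A, ∀ c ∈ A, π a * π c = π c * π a := by
    intro a ha c hc
    rw [← map_mul, ← map_mul, Subgroup.mul_comm_of_mem_isMulCommutative A ha hc]
  -- the key dichotomy
  have hkey : ∀ a ∈ A, a ≠ 1 → ∀ c ∈ A, c ≠ 1 → c = a ∨ c = a⁻¹ := by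
    intro a ha h1 c hc h2
    by_cases hca : c = a
    · exact Or.inl hca
    by_cases hca' : c = a⁻¹
    · exact Or.inr hca'
    exfalso
    have hac : a * c ≠ 1 := by
      intro hcon
      apply hca'
      calc c = a⁻¹ * (a * c) := by group
      _ = a⁻¹ := by rw [hcon, mul_one]
    have hm : a⁻¹ * c ≠ 1 := by
      intro hcon
      apply hca
      calc c = a * (a⁻¹ * c) := by group
      _ = a := by rw [hcon, mul_one]
    have c1 := hπcube a ha h1
    have c2 := hπcube c hc h2
    have c3 := hπcube (a * c) (mul_mem ha hc) hac
    have c4 := hπcube (a⁻¹ * c) (mul_mem (inv_mem ha) hc) hm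
    rw [map_mul] at c3
    rw [map_mul, map_inv] at c4
    have hfinal := endgame_calc (π n) (π a) (π c) hπs c1 c2 c3 c4 (hπcomm a ha c hc)
    have hπa3 : π n = π (a⁻¹ * a⁻¹ * a⁻¹) := by
      rw [hfinal, map_mul, map_mul, map_inv]
    exact hsne _ (mul_mem (mul_mem (inv_mem ha) (inv_mem ha)) (inv_mem ha)) hπa3
  -- conclude: A ⊆ {1, a₀, a₀⁻¹}
  have hsub : ∀ x : X, x ∈ A → x ∈ ({1, a₀, a₀⁻¹} : Set X) := by
    intro x hx
    simp only [Set.mem_insert_iff, Set.mem_singleton_iff]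
    by_cases hx1 : x = 1
    · exact Or.inl hx1
    · rcases hkey a₀ ha₀A ha₀1 x hx hx1 with h | h
      · exact Or.inr (Or.inl h)
      · exact Or.inr (Or.inr h)
  have hcard1 : Cardinal.mk A ≤ Cardinal.mk ({1, a₀, a₀⁻¹} : Set X) := by
    apply Cardinal.mk_le_of_injective
      (f := fun x : A => (⟨x.1, hsub x.1 x.2⟩ : ({1, a₀, a₀⁻¹} : Set X)))
    intro u v huv
    simp only [Subtype.mk.injEq] at huv
    exact Subtype.ext huv
  refine hcard1.trans ?_
  calc Cardinal.mk ({1, a₀, a₀⁻¹} : Set X)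
      ≤ Cardinal.mk ({a₀, a₀⁻¹} : Set X) + 1 := Cardinal.mk_insert_le
  _ ≤ (Cardinal.mk ({a₀⁻¹} : Set X) + 1) + 1 := add_le_add_left Cardinal.mk_insert_le 1
  _ = 3 := by rw [Cardinal.mk_singleton]; norm_num
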